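/- For any two nonnegative real vectors x, y of length n whose entries sum to the same value, the earth mover's distance between x and y (defined as the minimum total cost of moving mass, where moving an amount α from coordinate i to coordinate j costs α·|i−j|) equals the ℓ1-distance between their prefix-sum vectors, i.e., emd(x,y) = Σ_{k=1}^{n} |Σ_{i≤k} x_i − Σ_{i≤k} y_i|. -/

import Mathlib

namespace EMDAux

open Finset

variable {n : ℕ}

/-- Extend a `Fin n` vector to `ℕ` by zero. -/
noncomputable def ext (x : Fin n → ℝ) (m : ℕ) : ℝ :=
  if h : m < n then x ⟨m, h⟩ else 0

/-- Partial sums as a function on `ℕ`. -/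
noncomputable def ps (x : Fin n → ℝ) (m : ℕ) : ℝ := ∑ i ∈ Finset.range m, ext x i

lemma ps_succ (x : Fin n → ℝ) (m : ℕ) : ps x (m + 1) = ps x m + ext x m := by
  simp [ps, Finset.sum_range_succ]

lemma sum_Iio_eq_ps (x : Fin n → ℝ) (k : Fin n) :
    ∑ i ∈ Finset.Iio k, x i = ps x k.val := by
  have h := Finset.sum_map (Finset.Iio k) Fin.valEmbedding (ext x)
  rw [Fin.map_valEmbedding_Iio] at h
  rw [ps, ← Nat.Iio_eq_range, h]
  refine Finset.sum_congr rfl fun i _ => ?_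
  simp [ext, Fin.valEmbedding, i.isLt]

lemma sum_Iic_eq_ps (x : Fin n → ℝ) (k : Fin n) :
    ∑ i ∈ Finset.Iic k, x i = ps x (k.val + 1) := by
  rw [Finset.Iic_eq_cons_Iio, Finset.sum_cons, ps_succ, sum_Iio_eq_ps]
  have : ext x k.val = x k := by simp [ext, k.isLt]
  rw [this]; ring

lemma sum_univ_eq_ps (x : Fin n → ℝ) : ∑ i, x i = ps x n := by
  rw [ps, ← Fin.sum_univ_eq_sum_range (ext x) n]
  refine Finset.sum_congr rfl fun i _ => ?_
  simp [ext, i.isLt]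

end EMDAux

namespace EMDAux

lemma clamp_diff (a b c d : ℝ) (hab : a ≤ b) (hcd : c ≤ d) :
    min b (max a d) - min b (max a c) = max 0 (min b d - max a c) := by
  rcases le_total b d with h1 | h1 <;> rcases le_total a c with h2 | h2 <;>
    rcases le_total a d with h3 | h3 <;> rcases le_total b c with h4 | h4 <;>
    simp [min_def, max_def] <;> split_ifs <;> linarith

variable {n : ℕ}

lemma ext_nonneg {x : Fin n → ℝ} (hx : ∀ i, 0 ≤ x i) (m : ℕ) : 0 ≤ ext x m := by
  unfold ext; split_ifs
  · exact hx _
  · exact le_refl 0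

lemma ps_mono {x : Fin n → ℝ} (hx : ∀ i, 0 ≤ x i) {m m' : ℕ} (h : m ≤ m') :
    ps x m ≤ ps x m' := by
  unfold ps
  exact Finset.sum_le_sum_of_subset_of_nonneg (Finset.range_subset_range.2 h)
    fun i _ _ => ext_nonneg hx i

lemma ps_nonneg {x : Fin n → ℝ} (hx : ∀ i, 0 ≤ x i) (m : ℕ) : 0 ≤ ps x m := by
  simpa [ps] using ps_mono hx (Nat.zero_le m)

/-- The monotone (north-west corner) transport plan. -/
noncomputable def plan (x y : Fin n → ℝ) (i j : Fin n) : ℝ :=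
  max 0 (min (ps x (i.val + 1)) (ps y (j.val + 1)) - max (ps x i.val) (ps y j.val))

lemma plan_nonneg (x y : Fin n → ℝ) (i j : Fin n) : 0 ≤ plan x y i j := le_max_left _ _

lemma plan_rowsum (x y : Fin n → ℝ) (hx : ∀ i, 0 ≤ x i) (hy : ∀ i, 0 ≤ y i)
    (hsum : ∑ i, x i = ∑ i, y i) (i : Fin n) : ∑ j, plan x y i j = x i := by
  set a := ps x i.val with ha
  set b := ps x (i.val + 1) with hb
  have hab : a ≤ b := ps_mono hx (Nat.le_succ _)
  set F : ℕ → ℝ := fun m => min b (max a (ps y m)) with hF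
  have key : ∀ j : Fin n, plan x y i j = F (j.val + 1) - F j.val := by
    intro j
    rw [hF]
    simp only []
    rw [clamp_diff a b (ps y j.val) (ps y (j.val + 1)) hab (ps_mono hy (Nat.le_succ _))]
    rfl
  calc ∑ j, plan x y i j = ∑ j : Fin n, (F (j.val + 1) - F j.val) :=
        Finset.sum_congr rfl fun j _ => key j
    _ = ∑ m ∈ Finset.range n, (F (m + 1) - F m) :=
        Fin.sum_univ_eq_sum_range (fun m => F (m + 1) - F m) n
    _ = F n - F 0 := Finset.sum_range_sub F n
    _ = x i := by
        have h0 : F 0 = a := by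
          simp only [hF, ps, Finset.range_zero, Finset.sum_empty]
          rw [max_eq_left (ps_nonneg hx _), min_eq_right hab]
        have hn : F n = b := by
          have hyx : ps y n = ps x n := by
            rw [← sum_univ_eq_ps, ← sum_univ_eq_ps, hsum]
          simp only [hF, hyx]
          rw [max_eq_right (ps_mono hx (le_of_lt i.isLt)), min_eq_left (ps_mono hx i.isLt)]
        rw [h0, hn, hb, ha, ps_succ]
        have : ext x i.val = x i := by simp [ext, i.isLt]
        rw [this]; ring

lemma plan_symm (x y : Fin n → ℝ) (i j : Fin n) : plan x y i j = plan y x j i := by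
  simp [plan, min_comm, max_comm]

lemma plan_colsum (x y : Fin n → ℝ) (hx : ∀ i, 0 ≤ x i) (hy : ∀ i, 0 ≤ y i)
    (hsum : ∑ i, x i = ∑ i, y i) (j : Fin n) : ∑ i, plan x y i j = y j := by
  calc ∑ i, plan x y i j = ∑ i, plan y x j i := Finset.sum_congr rfl fun i _ => plan_symm x y i j
    _ = y j := plan_rowsum y x hy hx hsum.symm j

end EMDAux

namespace EMDAux

/-- indicator of `i ≤ k`. -/
noncomputable def e (i k : Fin n) : ℝ := if i ≤ k then 1 else 0

lemma dist_decomp_le {i j : Fin n} (hij : i ≤ j) :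
    |(i : ℝ) - (j : ℝ)| = ∑ k, |e i k - e j k| := by
  have key : ∀ k : Fin n, |e i k - e j k| = if k ∈ Finset.Ico i j then (1:ℝ) else 0 := by
    intro k
    by_cases h1 : i ≤ k <;> by_cases h2 : j ≤ k <;>
      simp [e, h1, h2, Finset.mem_Ico, lt_iff_not_ge] <;> first
      | rfl
      | (exact absurd (le_trans hij h2) h1)
      | tauto
  rw [Finset.sum_congr rfl fun k _ => key k, Finset.sum_ite_mem, Finset.univ_inter,
    Finset.sum_const, Fin.card_Ico]
  have hij' : (i : ℕ) ≤ (j : ℕ) := hij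
  have : ((j : ℕ) - (i : ℕ) : ℕ) = ((j:ℝ) - (i:ℝ)) := by push_cast [hij']; ring
  rw [nsmul_eq_mul, mul_one, this, abs_sub_comm, abs_of_nonneg (by
    have : ((i:ℕ):ℝ) ≤ ((j:ℕ):ℝ) := Nat.cast_le.2 hij'
    simpa using sub_nonneg.2 this)]

lemma dist_decomp (i j : Fin n) : |(i : ℝ) - (j : ℝ)| = ∑ k, |e i k - e j k| := by
  rcases le_total i j with h | h
  · exact dist_decomp_le h
  · rw [abs_sub_comm, dist_decomp_le h]
    exact Finset.sum_congr rfl fun k _ => abs_sub_comm _ _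

lemma sum_ite_le (k : Fin n) (x : Fin n → ℝ) :
    ∑ i : Fin n, (if i ≤ k then x i else 0) = ∑ i ∈ Finset.Iic k, x i := by
  simp only [← Finset.mem_Iic]
  rw [Finset.sum_ite_mem, Finset.univ_inter]

lemma marg_e (x y : Fin n → ℝ) (α : Fin n → Fin n → ℝ)
    (hrow : ∀ i, ∑ j, α i j = x i) (hcol : ∀ j, ∑ i, α i j = y j) (k : Fin n) :
    ∑ i, ∑ j, α i j * (e i k - e j k)
      = ∑ i ∈ Finset.Iic k, x i - ∑ i ∈ Finset.Iic k, y i := by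
  have h1 : ∑ i, ∑ j, α i j * e i k = ∑ i ∈ Finset.Iic k, x i := by
    rw [← sum_ite_le k x]
    refine Finset.sum_congr rfl fun i _ => ?_
    rw [← Finset.sum_mul, hrow i, e]
    split_ifs <;> simp
  have h2 : ∑ i, ∑ j, α i j * e j k = ∑ i ∈ Finset.Iic k, y i := by
    rw [Finset.sum_comm, ← sum_ite_le k y]
    refine Finset.sum_congr rfl fun j _ => ?_
    rw [← Finset.sum_mul, hcol j, e]
    split_ifs <;> simp
  simp only [mul_sub]
  rw [Finset.sum_congr rfl fun i _ => Finset.sum_sub_distrib _ _, Finset.sum_sub_distrib, h1, h2]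

lemma cost_eq (α : Fin n → Fin n → ℝ) :
    ∑ i, ∑ j, α i j * |(i : ℝ) - (j : ℝ)|
      = ∑ k, ∑ i, ∑ j, α i j * |e i k - e j k| := by
  calc ∑ i, ∑ j, α i j * |(i : ℝ) - (j : ℝ)|
      = ∑ i, ∑ j, ∑ k, α i j * |e i k - e j k| := by
        refine Finset.sum_congr rfl fun i _ => Finset.sum_congr rfl fun j _ => ?_
        rw [dist_decomp, Finset.mul_sum]
    _ = ∑ i, ∑ k, ∑ j, α i j * |e i k - e j k| :=
        Finset.sum_congr rfl fun i _ => Finset.sum_comm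
    _ = ∑ k, ∑ i, ∑ j, α i j * |e i k - e j k| := Finset.sum_comm

lemma lower_bound (x y : Fin n → ℝ) (α : Fin n → Fin n → ℝ)
    (hα : ∀ i j, 0 ≤ α i j)
    (hrow : ∀ i, ∑ j, α i j = x i) (hcol : ∀ j, ∑ i, α i j = y j) :
    ∑ k, |∑ i ∈ Finset.Iic k, x i - ∑ i ∈ Finset.Iic k, y i|
      ≤ ∑ i, ∑ j, α i j * |(i : ℝ) - (j : ℝ)| := by
  rw [cost_eq α]
  refine Finset.sum_le_sum fun k _ => ?_
  rw [← marg_e x y α hrow hcol k]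
  calc |∑ i, ∑ j, α i j * (e i k - e j k)|
      ≤ ∑ i, |∑ j, α i j * (e i k - e j k)| := Finset.abs_sum_le_sum_abs _ _
    _ ≤ ∑ i, ∑ j, |α i j * (e i k - e j k)| :=
        Finset.sum_le_sum fun i _ => Finset.abs_sum_le_sum_abs _ _
    _ = ∑ i, ∑ j, α i j * |e i k - e j k| := by
        refine Finset.sum_congr rfl fun i _ => Finset.sum_congr rfl fun j _ => ?_
        rw [abs_mul, abs_of_nonneg (hα i j)]

end EMDAux

namespace EMDAux

lemma plan_zero_of_right (x y : Fin n → ℝ) (hx : ∀ i, 0 ≤ x i) (hy : ∀ i, 0 ≤ y i)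
    {k i j : Fin n} (hc : ∑ i ∈ Finset.Iic k, y i ≤ ∑ i ∈ Finset.Iic k, x i)
    (hik : ¬ i ≤ k) (hjk : j ≤ k) : plan x y i j = 0 := by
  have hc' : ps y (k.val + 1) ≤ ps x (k.val + 1) := by
    rw [← sum_Iic_eq_ps, ← sum_Iic_eq_ps]; exact hc
  have h1 : ps y (j.val + 1) ≤ ps y (k.val + 1) :=
    ps_mono hy (Nat.succ_le_succ (Fin.le_def.mp hjk))
  have h2 : ps x (k.val + 1) ≤ ps x i.val :=
    ps_mono hx (Nat.succ_le_of_lt (Fin.lt_def.mp (not_le.mp hik)))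
  refine max_eq_left ?_
  have := (min_le_right (ps x (i.val + 1)) (ps y (j.val + 1))).trans
    ((h1.trans (hc'.trans h2)).trans (le_max_left (ps x i.val) (ps y j.val)))
  linarith

lemma plan_zero_of_left (x y : Fin n → ℝ) (hx : ∀ i, 0 ≤ x i) (hy : ∀ i, 0 ≤ y i)
    {k i j : Fin n} (hc : ∑ i ∈ Finset.Iic k, x i ≤ ∑ i ∈ Finset.Iic k, y i)
    (hik : i ≤ k) (hjk : ¬ j ≤ k) : plan x y i j = 0 := by
  rw [plan_symm]
  exact plan_zero_of_right y x hy hx hc hjk hik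

lemma plan_cost_k (x y : Fin n → ℝ) (hx : ∀ i, 0 ≤ x i) (hy : ∀ i, 0 ≤ y i)
    (hsum : ∑ i, x i = ∑ i, y i) (k : Fin n) :
    ∑ i, ∑ j, plan x y i j * |e i k - e j k|
      = |∑ i ∈ Finset.Iic k, x i - ∑ i ∈ Finset.Iic k, y i| := by
  have hmarg := marg_e x y (plan x y) (plan_rowsum x y hx hy hsum)
    (plan_colsum x y hx hy hsum) k
  rcases le_total (∑ i ∈ Finset.Iic k, x i) (∑ i ∈ Finset.Iic k, y i) with hc | hc
  · have hpt : ∀ i j, plan x y i j * |e i k - e j k|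
        = -(plan x y i j * (e i k - e j k)) := by
      intro i j
      by_cases hik : i ≤ k <;> by_cases hjk : j ≤ k
      · simp [e, hik, hjk]
      · rw [plan_zero_of_left x y hx hy hc hik hjk]; ring
      · simp [e, hik, hjk]
      · simp [e, hik, hjk]
    calc ∑ i, ∑ j, plan x y i j * |e i k - e j k|
        = -∑ i, ∑ j, plan x y i j * (e i k - e j k) := by
          rw [← Finset.sum_neg_distrib]
          refine Finset.sum_congr rfl fun i _ => ?_
          rw [← Finset.sum_neg_distrib]
          exact Finset.sum_congr rfl fun j _ => hpt i j
      _ = |∑ i ∈ Finset.Iic k, x i - ∑ i ∈ Finset.Iic k, y i| := by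
          rw [hmarg, abs_of_nonpos (sub_nonpos.2 hc), neg_sub]
  · have hpt : ∀ i j, plan x y i j * |e i k - e j k|
        = plan x y i j * (e i k - e j k) := by
      intro i j
      by_cases hik : i ≤ k <;> by_cases hjk : j ≤ k
      · simp [e, hik, hjk]
      · simp [e, hik, hjk]
      · rw [plan_zero_of_right x y hx hy hc hik hjk]; ring
      · simp [e, hik, hjk]
    calc ∑ i, ∑ j, plan x y i j * |e i k - e j k|
        = ∑ i, ∑ j, plan x y i j * (e i k - e j k) :=
          Finset.sum_congr rfl fun i _ => Finset.sum_congr rfl fun j _ => hpt i j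
      _ = |∑ i ∈ Finset.Iic k, x i - ∑ i ∈ Finset.Iic k, y i| := by
          rw [hmarg, abs_of_nonneg (sub_nonneg.2 hc)]

lemma plan_cost (x y : Fin n → ℝ) (hx : ∀ i, 0 ≤ x i) (hy : ∀ i, 0 ≤ y i)
    (hsum : ∑ i, x i = ∑ i, y i) :
    ∑ i, ∑ j, plan x y i j * |(i : ℝ) - (j : ℝ)|
      = ∑ k, |∑ i ∈ Finset.Iic k, x i - ∑ i ∈ Finset.Iic k, y i| := by
  rw [cost_eq (plan x y)]
  exact Finset.sum_congr rfl fun k _ => plan_cost_k x y hx hy hsum k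

end EMDAux

/-- The earth mover's distance (defined as the infimum of total transport cost over all
nonnegative transport plans with marginals `x` and `y`) equals the ℓ1-distance of the
prefix-sum vectors. -/
theorem stmt0 (n : ℕ) (x y : Fin n → ℝ)
    (hx : ∀ i, 0 ≤ x i) (hy : ∀ i, 0 ≤ y i)
    (hsum : ∑ i, x i = ∑ i, y i) :
    sInf {c : ℝ | ∃ α : Fin n → Fin n → ℝ,
        (∀ i j, 0 ≤ α i j) ∧
        (∀ i, ∑ j, α i j = x i) ∧
        (∀ j, ∑ i, α i j = y j) ∧
        c = ∑ i, ∑ j, α i j * |(i : ℝ) - (j : ℝ)|} =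
      ∑ k, |∑ i ∈ Finset.Iic k, x i - ∑ i ∈ Finset.Iic k, y i| := by
  set T := ∑ k, |∑ i ∈ Finset.Iic k, x i - ∑ i ∈ Finset.Iic k, y i| with hT
  have hmem : T ∈ {c : ℝ | ∃ α : Fin n → Fin n → ℝ,
      (∀ i j, 0 ≤ α i j) ∧ (∀ i, ∑ j, α i j = x i) ∧ (∀ j, ∑ i, α i j = y j) ∧
      c = ∑ i, ∑ j, α i j * |(i : ℝ) - (j : ℝ)|} := by
    exact ⟨EMDAux.plan x y, EMDAux.plan_nonneg x y,
      EMDAux.plan_rowsum x y hx hy hsum, EMDAux.plan_colsum x y hx hy hsum,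
      (EMDAux.plan_cost x y hx hy hsum).symm⟩
  have hlb : ∀ c ∈ {c : ℝ | ∃ α : Fin n → Fin n → ℝ,
      (∀ i j, 0 ≤ α i j) ∧ (∀ i, ∑ j, α i j = x i) ∧ (∀ j, ∑ i, α i j = y j) ∧
      c = ∑ i, ∑ j, α i j * |(i : ℝ) - (j : ℝ)|}, T ≤ c := by
    rintro c ⟨α, hα, hrow, hcol, rfl⟩
    exact EMDAux.lower_bound x y α hα hrow hcol
  exact le_antisymm (csInf_le ⟨T, hlb⟩ hmem) (le_csInf ⟨T, hmem⟩ hlb)
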